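/- For a ¬-free nested program P over atoms A with the two-copy classical translation pl(P), a classical interpretation I of the extended language (with primed atoms) satisfies pl(P) if and only if (I_new, I_old) is an SE-model of P, where I_old = { A ∈ A : I ⊨ A } and I_new = { A ∈ A : I ⊨ A' }. Moreover every positive SE-model of P arises this way. -/
import Mathlib


open scoped Classical

inductive Lit where
  | pos : ℕ → Lit
  | neg : ℕ → Lit
deriving DecidableEq

inductive Fml where
  | bot : Fml
  | top : Fml
  | lit : Lit → Fml
  | not : Fml → Fml
  | conj : Fml → Fml → Fml
  | disj : Fml → Fml → Fml
deriving DecidableEq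

structure Rule where
  head : Fml
  body : Fml
deriving DecidableEq

abbrev Prog := Set Rule

/-- A set of literals is consistent if it contains no complementary pair. -/
def Consistent (X : Set Lit) : Prop :=
  ∀ a : ℕ, ¬ (Lit.pos a ∈ X ∧ Lit.neg a ∈ X)

def Sat (X : Set Lit) : Fml → Prop
  | Fml.bot => False
  | Fml.top => True
  | Fml.lit l => l ∈ X
  | Fml.not F => ¬ Sat X F
  | Fml.conj F G => Sat X F ∧ Sat X G
  | Fml.disj F G => Sat X F ∨ Sat X G

def SatRule (X : Set Lit) (r : Rule) : Prop := Sat X r.body → Sat X r.head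

def SatProg (X : Set Lit) (P : Prog) : Prop := ∀ r ∈ P, SatRule X r

/-- The reduct of a formula relative to X. -/
noncomputable def Reduct (X : Set Lit) : Fml → Fml
  | Fml.bot => Fml.bot
  | Fml.top => Fml.top
  | Fml.lit l => Fml.lit l
  | Fml.not F => if Sat X F then Fml.bot else Fml.top
  | Fml.conj F G => Fml.conj (Reduct X F) (Reduct X G)
  | Fml.disj F G => Fml.disj (Reduct X F) (Reduct X G)

noncomputable def ReductRule (X : Set Lit) (r : Rule) : Rule :=
  ⟨Reduct X r.head, Reduct X r.body⟩

noncomputable def ReductProg (X : Set Lit) (P : Prog) : Prog :=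
  ReductRule X '' P

/-- Y is an answer set for P: Y is minimal among consistent sets satisfying the reduct of P w.r.t. Y. -/
def AnswerSet (Y : Set Lit) (P : Prog) : Prop :=
  Consistent Y ∧ SatProg Y (ReductProg Y P) ∧
    ∀ Z : Set Lit, Consistent Z → SatProg Z (ReductProg Y P) → Z ⊆ Y → Z = Y

def SEModel (P : Prog) (X Y : Set Lit) : Prop :=
  Consistent X ∧ Consistent Y ∧ X ⊆ Y ∧ SatProg Y P ∧ SatProg X (ReductProg Y P)

def StrongEq (P Q : Prog) : Prop :=
  ∀ R : Prog, ∀ Y : Set Lit, AnswerSet Y (P ∪ R) ↔ AnswerSet Y (Q ∪ R)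

def Fml.negFree : Fml → Prop
  | Fml.bot => True
  | Fml.top => True
  | Fml.lit l => ∃ a, l = Lit.pos a
  | Fml.not F => F.negFree
  | Fml.conj F G => F.negFree ∧ G.negFree
  | Fml.disj F G => F.negFree ∧ G.negFree

def ProgNegFree (P : Prog) : Prop := ∀ r ∈ P, r.head.negFree ∧ r.body.negFree

/-- The set of atoms (positive literals) in a set of literals. -/
def PosLits (Z : Set Lit) : Set Lit := {l ∈ Z | ∃ a, l = Lit.pos a}

def AtomsOnly (Z : Set Lit) : Prop := ∀ l ∈ Z, ∃ a, l = Lit.pos a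

/-- Classical propositional formulas over an original (`false`) and a primed (`true`)
copy of the atoms. -/
inductive CF where
  | bot : CF
  | top : CF
  | atom : Bool → ℕ → CF
  | not : CF → CF
  | and : CF → CF → CF
  | or : CF → CF → CF
  | imp : CF → CF → CF

/-- Classical satisfaction: an interpretation is the set of true (copy, atom) pairs. -/
def CSat (I : Set (Bool × ℕ)) : CF → Prop
  | CF.bot => False
  | CF.top => True
  | CF.atom b a => (b, a) ∈ I
  | CF.not φ => ¬ CSat I φ
  | CF.and φ ψ => CSat I φ ∧ CSat I ψ
  | CF.or φ ψ => CSat I φ ∨ CSat I ψ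
  | CF.imp φ ψ => CSat I φ → CSat I ψ

/-- pl: replace not by ¬, ; by ∨, , by ∧ (on ¬-free formulas all literals are atoms). -/
def plF : Fml → CF
  | Fml.bot => CF.bot
  | Fml.top => CF.top
  | Fml.lit (Lit.pos a) => CF.atom false a
  | Fml.lit (Lit.neg _) => CF.bot
  | Fml.not F => CF.not (plF F)
  | Fml.conj F G => CF.and (plF F) (plF G)
  | Fml.disj F G => CF.or (plF F) (plF G)

def plR (r : Rule) : CF := CF.imp (plF r.body) (plF r.head)

/-- φ' : replace every occurrence of an original atom that is not in the scope of ¬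
by its primed counterpart. -/
def primeCF : CF → CF
  | CF.bot => CF.bot
  | CF.top => CF.top
  | CF.atom _ a => CF.atom true a
  | CF.not φ => CF.not φ
  | CF.and φ ψ => CF.and (primeCF φ) (primeCF ψ)
  | CF.or φ ψ => CF.or (primeCF φ) (primeCF ψ)
  | CF.imp φ ψ => CF.imp (primeCF φ) (primeCF ψ)

/-- The theory pl(P) = { pl(r) : r ∈ P } ∪ { pl(r)' : r ∈ P } ∪ { A' ⊃ A : A ∈ 𝒜 }. -/
def plTh (A : Set ℕ) (P : Prog) : Set CF :=
  {φ | ∃ r ∈ P, φ = plR r} ∪ {φ | ∃ r ∈ P, φ = primeCF (plR r)} ∪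
    {φ | ∃ a ∈ A, φ = CF.imp (CF.atom true a) (CF.atom false a)}

/-- Atoms occurring in a formula. -/
def Fml.atoms : Fml → Set ℕ
  | Fml.bot => ∅
  | Fml.top => ∅
  | Fml.lit (Lit.pos a) => {a}
  | Fml.lit (Lit.neg a) => {a}
  | Fml.not F => F.atoms
  | Fml.conj F G => F.atoms ∪ G.atoms
  | Fml.disj F G => F.atoms ∪ G.atoms

def ProgAtoms (P : Prog) : Set ℕ :=
  {a | ∃ r ∈ P, a ∈ r.head.atoms ∪ r.body.atoms}

lemma mem_pos_image {S : Set ℕ} {a : ℕ} : Lit.pos a ∈ Lit.pos '' S ↔ a ∈ S := by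
  constructor
  · rintro ⟨b, hb, h⟩; cases h; exact hb
  · exact fun h => ⟨a, h, rfl⟩

lemma neg_not_mem_pos_image {S : Set ℕ} {a : ℕ} : Lit.neg a ∉ Lit.pos '' S := by
  rintro ⟨b, hb, h⟩; cases h

lemma sat_plF (I : Set (Bool × ℕ)) (F : Fml) :
    CSat I (plF F) ↔ Sat (Lit.pos '' {a | (false, a) ∈ I}) F := by
  induction F with
  | bot => exact Iff.rfl
  | top => exact Iff.rfl
  | lit l =>
    cases l with
    | pos a => simpa [plF, CSat, Sat] using mem_pos_image.symm
    | neg a => simp [plF, CSat, Sat, neg_not_mem_pos_image]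
  | not F ih => simp [plF, CSat, Sat, ih]
  | conj F G ihF ihG => simp [plF, CSat, Sat, ihF, ihG]
  | disj F G ihF ihG => simp [plF, CSat, Sat, ihF, ihG]

lemma sat_prime (I : Set (Bool × ℕ)) (F : Fml) :
    CSat I (primeCF (plF F)) ↔
      Sat (Lit.pos '' {a | (true, a) ∈ I}) (Reduct (Lit.pos '' {a | (false, a) ∈ I}) F) := by
  induction F with
  | bot => exact Iff.rfl
  | top => exact Iff.rfl
  | lit l =>
    cases l with
    | pos a => simpa [plF, primeCF, CSat, Sat, Reduct] using mem_pos_image.symm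
    | neg a => simp [plF, primeCF, CSat, Sat, Reduct, neg_not_mem_pos_image]
  | not F ih =>
    have h := sat_plF I F
    by_cases hs : Sat (Lit.pos '' {a | (false, a) ∈ I}) F <;>
      simp [plF, primeCF, CSat, Reduct, Sat, hs, h]
  | conj F G ihF ihG => simp [plF, primeCF, CSat, Sat, Reduct, ihF, ihG]
  | disj F G ihF ihG => simp [plF, primeCF, CSat, Sat, Reduct, ihF, ihG]

lemma consistent_pos_image (S : Set ℕ) : Consistent (Lit.pos '' S) := by
  intro a ⟨_, h⟩; exact neg_not_mem_pos_image h

theorem stmt17 (A : Set ℕ) (P : Prog) (hnf : ProgNegFree P) (hA : ProgAtoms P ⊆ A) :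
    (∀ I : Set (Bool × ℕ), (∀ x ∈ I, x.2 ∈ A) →
      ((∀ φ ∈ plTh A P, CSat I φ) ↔
        SEModel P (Lit.pos '' {a | (true, a) ∈ I}) (Lit.pos '' {a | (false, a) ∈ I}))) ∧
    (∀ X Y : Set Lit, SEModel P X Y → AtomsOnly X → AtomsOnly Y →
      (∀ a : ℕ, Lit.pos a ∈ Y → a ∈ A) →
      ∃ I : Set (Bool × ℕ), (∀ x ∈ I, x.2 ∈ A) ∧
        X = Lit.pos '' {a | (true, a) ∈ I} ∧ Y = Lit.pos '' {a | (false, a) ∈ I}) := by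
  constructor
  · intro I hI
    set X := Lit.pos '' {a | (true, a) ∈ I} with hX
    set Y := Lit.pos '' {a | (false, a) ∈ I} with hY
    constructor
    · intro hsat
      refine ⟨consistent_pos_image _, consistent_pos_image _, ?_, ?_, ?_⟩
      · rintro l ⟨a, ha, rfl⟩
        have hmem : (CF.imp (CF.atom true a) (CF.atom false a)) ∈ plTh A P :=
          Or.inr ⟨a, hI _ ha, rfl⟩
        exact mem_pos_image.mpr (hsat _ hmem ha)
      · intro r hr hb
        have hmem : plR r ∈ plTh A P := Or.inl (Or.inl ⟨r, hr, rfl⟩)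
        have := hsat _ hmem
        exact (sat_plF I r.head).mp (this ((sat_plF I r.body).mpr hb))
      · rintro r' ⟨r, hr, rfl⟩ hb
        have hmem : primeCF (plR r) ∈ plTh A P := Or.inl (Or.inr ⟨r, hr, rfl⟩)
        have := hsat _ hmem
        exact (sat_prime I r.head).mp (this ((sat_prime I r.body).mpr hb))
    · rintro ⟨_, _, hXY, hYP, hXR⟩ φ hφ
      rcases hφ with (⟨r, hr, rfl⟩ | ⟨r, hr, rfl⟩) | ⟨a, ha, rfl⟩
      · intro hb
        exact (sat_plF I r.head).mpr (hYP r hr ((sat_plF I r.body).mp hb))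
      · intro hb
        exact (sat_prime I r.head).mpr
          (hXR (ReductRule Y r) ⟨r, hr, rfl⟩ ((sat_prime I r.body).mp hb))
      · intro h
        have : Lit.pos a ∈ X := mem_pos_image.mpr h
        exact mem_pos_image.mp (hXY this)
  · intro X Y hse hX hY hYA
    refine ⟨{p | (p.1 = true ∧ Lit.pos p.2 ∈ X) ∨ (p.1 = false ∧ Lit.pos p.2 ∈ Y)}, ?_, ?_, ?_⟩
    · rintro ⟨b, a⟩ (⟨_, h⟩ | ⟨_, h⟩)
      · exact hYA a (hse.2.2.1 h)
      · exact hYA a h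
    · ext l
      constructor
      · intro hl
        rcases hX l hl with ⟨a, rfl⟩
        exact ⟨a, Or.inl ⟨rfl, hl⟩, rfl⟩
      · rintro ⟨a, ha, rfl⟩
        rcases ha with ⟨_, h⟩ | ⟨h, _⟩
        · exact h
        · exact absurd h (by simp)
    · ext l
      constructor
      · intro hl
        rcases hY l hl with ⟨a, rfl⟩
        exact ⟨a, Or.inr ⟨rfl, hl⟩, rfl⟩
      · rintro ⟨a, ha, rfl⟩
        rcases ha with ⟨h, _⟩ | ⟨_, h⟩
        · exact absurd h (by simp)
        · exact h
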